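/- Under the setting of the inexact inertial proximal–gradient step: let 0 < α ≤ α_max, μ > 0, D symmetric positive definite with (1/μ)I ⪯ D ⪯ μI, h the strongly convex model function with minimizer ŷ, and let ỹ satisfy h(ỹ) ≤ (2/(2+τ)) h(ŷ) for τ ≥ 0. Then ‖ŷ − x‖² ≤ 2 α_max μ (1 + τ/2)(−h(ỹ)). -/

import Mathlib

open Matrix

/-- Action of a matrix on a vector of `EuclideanSpace ℝ (Fin n)`. -/
noncomputable def mulVecE {n : ℕ} (D : Matrix (Fin n) (Fin n) ℝ)
    (v : EuclideanSpace ℝ (Fin n)) : EuclideanSpace ℝ (Fin n) :=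
  (WithLp.equiv 2 (Fin n → ℝ)).symm (D *ᵥ fun i => v i)

/-- The quadratic form `⟨v, D v⟩` (i.e. `‖v‖_D²`). -/
noncomputable def quadE {n : ℕ} (D : Matrix (Fin n) (Fin n) ℝ)
    (v : EuclideanSpace ℝ (Fin n)) : ℝ :=
  (fun i => v i) ⬝ᵥ (D *ᵥ fun i => v i)

theorem stmt6 {n : ℕ} (f : EuclideanSpace ℝ (Fin n) → ℝ) (hf : ContDiff ℝ 1 f)
    (φ : EuclideanSpace ℝ (Fin n) → ℝ) (hconv : ConvexOn ℝ Set.univ φ)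
    (hlsc : LowerSemicontinuous φ)
    (α αmax β τ μ : ℝ) (hα : 0 < α) (hαmax : α ≤ αmax) (hβ : 0 < β) (hτ : 0 ≤ τ) (hμ : 0 < μ)
    (D : Matrix (Fin n) (Fin n) ℝ) (hsym : D.IsSymm) (hpd : D.PosDef)
    (hlow : ∀ v : Fin n → ℝ, (1/μ) * (v ⬝ᵥ v) ≤ v ⬝ᵥ (D *ᵥ v))
    (hup : ∀ v : Fin n → ℝ, v ⬝ᵥ (D *ᵥ v) ≤ μ * (v ⬝ᵥ v))
    (x w : EuclideanSpace ℝ (Fin n))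
    (h : EuclideanSpace ℝ (Fin n) → ℝ)
    (hh : h = fun y => (inner ℝ (gradient f x - (β/α) • mulVecE D (x - w)) (y - x) : ℝ)
      + (1/(2*α)) * quadE D (y - x) + φ y - φ x)
    (yhat ytil : EuclideanSpace ℝ (Fin n)) (hmin : IsMinOn h Set.univ yhat)
    (happrox : h ytil ≤ (2/(2+τ)) * h yhat) :
    ‖yhat - x‖^2 ≤ 2 * αmax * μ * (1 + τ/2) * (-h ytil) := by
  set c := gradient f x - (β/α) • mulVecE D (x - w) with hc
  set v := yhat - x with hv
  have hquad_smul : ∀ (s : ℝ) (u : EuclideanSpace ℝ (Fin n)),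
      quadE D (s • u) = s^2 * quadE D u := by
    intro s u
    have hfu : (fun i => (s • u) i) = s • (fun i => u i) := rfl
    simp only [quadE]
    rw [hfu, Matrix.mulVec_smul, smul_dotProduct, dotProduct_smul, smul_eq_mul, smul_eq_mul]
    ring
  have hx0 : h x = 0 := by
    have hq0 : quadE D (0 : EuclideanSpace ℝ (Fin n)) = 0 := by
      have heq : (0 : EuclideanSpace ℝ (Fin n)) = (0:ℝ) • (0 : EuclideanSpace ℝ (Fin n)) := by
        simp
      rw [heq, hquad_smul]; ring
    simp [hh, hq0]
  have hdvv : (fun i => v i) ⬝ᵥ (fun i => v i) = ‖v‖^2 := by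
    rw [← real_inner_self_eq_norm_sq]
    simp [PiLp.inner_apply, dotProduct, RCLike.inner_apply]
    rw [EuclideanSpace.norm_eq, Real.sq_sqrt (by positivity)]
    simp [Real.norm_eq_abs, sq_abs, sq]
  have hQnn : 0 ≤ quadE D v := by
    have h1 := hlow (fun i => v i)
    have h2 : 0 ≤ (fun i => v i) ⬝ᵥ (fun i => v i) := by
      rw [hdvv]; positivity
    have : 0 ≤ (1/μ) * ((fun i => v i) ⬝ᵥ (fun i => v i)) := by positivity
    exact le_trans this h1
  set Q := (1/(2*α)) * quadE D v with hQdef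
  have hQnn' : 0 ≤ Q := by
    have : 0 < 1/(2*α) := by positivity
    positivity
  have key : ∀ t : ℝ, 0 < t → t ≤ 1 → h yhat + Q ≤ t * Q := by
    intro t ht ht1
    have hyt : h yhat ≤ h ((1-t) • yhat + t • x) := hmin (Set.mem_univ _)
    have hsub : ((1-t) • yhat + t • x) - x = (1-t) • v := by
      rw [hv]; module
    have hφ : φ ((1-t) • yhat + t • x) ≤ (1-t) * φ yhat + t * φ x :=
      hconv.2 (Set.mem_univ _) (Set.mem_univ _) (by linarith) (le_of_lt ht) (by ring)
    have hyhat_eq : h yhat = inner ℝ c v + (1/(2*α)) * quadE D v + φ yhat - φ x := by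
      rw [hh]
    have hyt_eq : h ((1-t) • yhat + t • x)
        = (1-t) * (inner ℝ c v : ℝ) + (1-t)^2 * ((1/(2*α)) * quadE D v)
          + φ ((1-t) • yhat + t • x) - φ x := by
      rw [hh]; simp only
      rw [hsub, real_inner_smul_right, hquad_smul]; ring
    rw [hyt_eq] at hyt
    rw [hyhat_eq] at hyt ⊢
    set I := (inner ℝ c v : ℝ)
    set P := φ yhat
    set X := φ x
    rw [hQdef]
    set R := (1/(2*α)) * quadE D v with hR
    have hRnn : 0 ≤ R := hQnn'
    nlinarith [hyt, hφ, mul_pos ht ht, sq_nonneg (1-t)]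
  have hle : h yhat + Q ≤ 0 := by
    by_contra hpos
    push_neg at hpos
    rcases eq_or_lt_of_le hQnn' with hQ0 | hQ0
    · have := key 1 one_pos le_rfl
      rw [← hQ0] at this
      linarith
    · have ht0 : 0 < min 1 ((h yhat + Q)/(2*Q)) := by
        exact lt_min one_pos (div_pos hpos (by linarith))
      have := key _ ht0 (min_le_left _ _)
      have h2 : min 1 ((h yhat + Q)/(2*Q)) * Q ≤ ((h yhat + Q)/(2*Q)) * Q := by
        apply mul_le_mul_of_nonneg_right (min_le_right _ _) (le_of_lt hQ0)
      have h3 : ((h yhat + Q)/(2*Q)) * Q = (h yhat + Q)/2 := by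
        field_simp
      linarith
  have hyhat0 : h yhat ≤ 0 := by
    have := isMinOn_iff.mp hmin x (Set.mem_univ x)
    rw [hx0] at this; exact this
  have hquadle : quadE D v ≤ 2 * α * (-h yhat) := by
    have : (1/(2*α)) * quadE D v ≤ -h yhat := by linarith
    calc quadE D v = (2*α) * ((1/(2*α)) * quadE D v) := by field_simp
      _ ≤ (2*α) * (-h yhat) := by
          apply mul_le_mul_of_nonneg_left this (by positivity)
      _ = 2 * α * (-h yhat) := by ring
  have hnorm_le : ‖v‖^2 ≤ μ * quadE D v := by
    have h1 := hlow (fun i => v i)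
    rw [hdvv] at h1
    have := mul_le_mul_of_nonneg_left h1 (le_of_lt hμ)
    calc ‖v‖^2 = μ * ((1/μ) * ‖v‖^2) := by field_simp
      _ ≤ μ * ((fun i => v i) ⬝ᵥ (D *ᵥ fun i => v i)) := this
      _ = μ * quadE D v := rfl
  have h2τ : (0:ℝ) < 2 + τ := by linarith
  have hstep : -h yhat ≤ (1 + τ/2) * (-h ytil) := by
    have h1 : (1 + τ/2) * h ytil ≤ (1 + τ/2) * ((2/(2+τ)) * h yhat) := by
      apply mul_le_mul_of_nonneg_left happrox (by linarith)
    have h2 : (1 + τ/2) * ((2/(2+τ)) * h yhat) = h yhat := by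
      field_simp
    linarith
  have hhy : 0 ≤ -h yhat := by linarith
  calc ‖v‖^2 ≤ μ * quadE D v := hnorm_le
    _ ≤ μ * (2 * α * (-h yhat)) := by
        apply mul_le_mul_of_nonneg_left hquadle (le_of_lt hμ)
    _ ≤ μ * (2 * αmax * (-h yhat)) := by
        apply mul_le_mul_of_nonneg_left _ (le_of_lt hμ)
        nlinarith
    _ ≤ μ * (2 * αmax * ((1 + τ/2) * (-h ytil))) := by
        apply mul_le_mul_of_nonneg_left _ (le_of_lt hμ)
        apply mul_le_mul_of_nonneg_left hstep (by linarith : (0:ℝ) ≤ 2 * αmax)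
    _ = 2 * αmax * μ * (1 + τ/2) * (-h ytil) := by ring
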